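/- Let λ₁, λ₂ > 0 with λ₁ ≠ λ₂ and G₀(r) = −(1/(2π(λ₁²−λ₂²)))[K₀(λ₁r) − K₀(λ₂r)]. Then G₀ is C¹ on [0,∞) (after continuous extension), i.e., G₀ and G₀' extend continuously to r = 0, with G₀'(0) = 0. -/

import Mathlib

open Real MeasureTheory

/-- Modified Bessel function of the second kind of order zero,
via the integral representation `K₀(x) = ∫₀^∞ exp(-x cosh t) dt`. -/
noncomputable def K0 (x : ℝ) : ℝ :=
  ∫ t in Set.Ioi (0 : ℝ), Real.exp (-x * Real.cosh t)

/-- Modified Bessel function of the second kind of order one,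
via the integral representation `K₁(x) = ∫₀^∞ exp(-x cosh t) cosh t dt`. -/
noncomputable def K1 (x : ℝ) : ℝ :=
  ∫ t in Set.Ioi (0 : ℝ), Real.exp (-x * Real.cosh t) * Real.cosh t



open Filter Topology

section Aux
open Set

lemma le_cosh' (t : ℝ) : t ≤ Real.cosh t := by
  rcases le_total t 0 with h | h
  · exact h.trans (by positivity)
  · have h1 : t/2 + 1 ≤ Real.exp (t/2) := Real.add_one_le_exp _
    have h2 : Real.exp t = Real.exp (t/2) * Real.exp (t/2) := by
      rw [← Real.exp_add]; ring_nf
    have h3 : 0 < Real.exp (-t) := Real.exp_pos _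
    rw [Real.cosh_eq]
    nlinarith [sq_nonneg (t/2 - 1)]

lemma aux_exp_diff (p q : ℝ) :
    |Real.exp (-p) - Real.exp (-q)| ≤ |p - q| * Real.exp (-(min p q)) := by
  rcases le_total p q with h | h
  · rw [min_eq_left h, abs_of_nonneg (by nlinarith [Real.exp_le_exp.2 (neg_le_neg h)] :
      (0:ℝ) ≤ Real.exp (-p) - Real.exp (-q)), abs_of_nonpos (by linarith)]
    have h2 : Real.exp (-q) = Real.exp (-p) * Real.exp (p - q) := by
      rw [← Real.exp_add]; ring_nf
    have h3 : (p - q) + 1 ≤ Real.exp (p - q) := Real.add_one_le_exp _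
    nlinarith [Real.exp_pos (-p)]
  · rw [min_eq_right h, abs_of_nonpos (by nlinarith [Real.exp_le_exp.2 (neg_le_neg h)] :
      Real.exp (-p) - Real.exp (-q) ≤ 0), abs_of_nonneg (by linarith)]
    have h2 : Real.exp (-p) = Real.exp (-q) * Real.exp (q - p) := by
      rw [← Real.exp_add]; ring_nf
    have h3 : (q - p) + 1 ≤ Real.exp (q - p) := Real.add_one_le_exp _
    nlinarith [Real.exp_pos (-q)]

lemma int_exp_cosh {c : ℝ} (hc : 0 < c) :
    IntegrableOn (fun t => Real.exp (-c * Real.cosh t)) (Ioi (0:ℝ)) := by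
  refine (exp_neg_integrableOn_Ioi 0 hc).mono' ?_ ?_
  · exact (Real.continuous_exp.comp ((continuous_const.mul Real.continuous_cosh))).aestronglyMeasurable
  · filter_upwards with t
    rw [Real.norm_eq_abs, abs_of_pos (Real.exp_pos _)]
    exact Real.exp_le_exp.2 (by nlinarith [le_cosh' t])

lemma int_cosh_exp_cosh {c : ℝ} (hc : 0 < c) :
    IntegrableOn (fun t => Real.exp (-c * Real.cosh t) * Real.cosh t) (Ioi (0:ℝ)) := by
  have h2 : (0:ℝ) < c/2 := by positivity
  refine (((exp_neg_integrableOn_Ioi 0 h2)).const_mul (2/c)).mono' ?_ ?_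
  · exact ((Real.continuous_exp.comp ((continuous_const.mul Real.continuous_cosh))).mul
      Real.continuous_cosh).aestronglyMeasurable
  · filter_upwards with t
    have hch := Real.cosh_pos t
    have hct := le_cosh' t
    rw [Real.norm_eq_abs, abs_of_pos (by positivity)]
    have key : (c/2) * Real.cosh t ≤ Real.exp ((c/2) * Real.cosh t) := by
      nlinarith [Real.add_one_le_exp ((c/2) * Real.cosh t)]
    have hsplit : Real.exp (-c * Real.cosh t)
        = Real.exp (-(c/2) * Real.cosh t) * Real.exp (-(c/2) * Real.cosh t) := by
      rw [← Real.exp_add]; ring_nf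
    have hinv : Real.exp (-(c/2) * Real.cosh t) * Real.exp ((c/2) * Real.cosh t) = 1 := by
      rw [← Real.exp_add]; simp
    have h4 : Real.exp (-(c/2) * Real.cosh t) * Real.cosh t ≤ 2/c := by
      have hep := Real.exp_pos (-(c/2) * Real.cosh t)
      have h6 : (c/2) * (Real.exp (-(c/2) * Real.cosh t) * Real.cosh t) ≤ 1 := by
        calc (c/2) * (Real.exp (-(c/2) * Real.cosh t) * Real.cosh t)
            = Real.exp (-(c/2) * Real.cosh t) * ((c/2) * Real.cosh t) := by ring
          _ ≤ Real.exp (-(c/2) * Real.cosh t) * Real.exp ((c/2) * Real.cosh t) :=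
              mul_le_mul_of_nonneg_left key hep.le
          _ = 1 := hinv
      rw [le_div_iff₀ hc]
      linarith
    have h5 : Real.exp (-(c/2) * Real.cosh t) ≤ Real.exp (-(c/2) * t) :=
      Real.exp_le_exp.2 (by nlinarith)
    calc Real.exp (-c * Real.cosh t) * Real.cosh t
        = (Real.exp (-(c/2) * Real.cosh t) * Real.cosh t) * Real.exp (-(c/2) * Real.cosh t) := by
          rw [hsplit]; ring
      _ ≤ (2/c) * Real.exp (-(c/2) * t) := by
          apply mul_le_mul h4 h5 (Real.exp_pos _).le (by positivity)

lemma sinh_image {r : ℝ} (hr : 0 < r) :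
    (fun t => r * Real.sinh t) '' (Ioi (0:ℝ)) = Ioi (0:ℝ) := by
  ext w
  constructor
  · rintro ⟨t, ht, rfl⟩
    exact mul_pos hr (by simpa using Real.sinh_pos_iff.2 ht)
  · intro hw
    refine ⟨Real.arsinh (w / r), ?_, by simp only [Real.sinh_arsinh]; field_simp⟩
    have : (0:ℝ) < w / r := div_pos hw hr
    simpa using Real.arsinh_pos_iff.2 this

lemma sinh_subst {r : ℝ} (hr : 0 < r) (g : ℝ → ℝ) :
    ∫ w in Ioi (0:ℝ), g w = ∫ t in Ioi (0:ℝ), (r * Real.cosh t) * g (r * Real.sinh t) := by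
  have h := integral_image_eq_integral_abs_deriv_smul (s := Ioi (0:ℝ))
    (f := fun t => r * Real.sinh t)
    (f' := fun t => r * Real.cosh t) measurableSet_Ioi
    (fun t _ => ((Real.hasDerivAt_sinh t).const_mul r).hasDerivWithinAt)
    (fun t₁ _ t₂ _ h => Real.sinh_injective (mul_left_cancel₀ hr.ne' h)) g
  rw [sinh_image hr] at h
  rw [h]
  congr 1
  ext t
  rw [smul_eq_mul, abs_of_pos (mul_pos hr (Real.cosh_pos t))]

lemma sqrt_sinh {r : ℝ} (hr : 0 < r) (t : ℝ) :
    Real.sqrt ((r * Real.sinh t)^2 + r^2) = r * Real.cosh t := by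
  have : (r * Real.sinh t)^2 + r^2 = (r * Real.cosh t)^2 := by
    rw [mul_pow, mul_pow, Real.cosh_sq]; ring
  rw [this, Real.sqrt_sq (mul_pos hr (Real.cosh_pos t)).le]

lemma K0_rep {a r : ℝ} (ha : 0 < a) (hr : 0 < r) :
    K0 (a*r) = ∫ w in Ioi (0:ℝ),
      Real.exp (-a * Real.sqrt (w^2+r^2)) / Real.sqrt (w^2+r^2) := by
  rw [sinh_subst hr]
  unfold K0
  congr 1
  ext t
  rw [sqrt_sinh hr]
  have h := (mul_pos hr (Real.cosh_pos t)).ne'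
  field_simp

lemma K1_rep {a r : ℝ} (ha : 0 < a) (hr : 0 < r) :
    r * K1 (a*r) = ∫ w in Ioi (0:ℝ), Real.exp (-a * Real.sqrt (w^2+r^2)) := by
  rw [sinh_subst hr (fun w => Real.exp (-a * Real.sqrt (w^2+r^2)))]
  unfold K1
  rw [← integral_const_mul]
  congr 1
  ext t
  rw [sqrt_sinh hr]
  ring_nf

lemma le_sqrt_left {w r : ℝ} (hw : 0 ≤ w) : w ≤ Real.sqrt (w^2+r^2) := by
  nth_rewrite 1 [show w = Real.sqrt (w^2) from (Real.sqrt_sq hw).symm]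
  exact Real.sqrt_le_sqrt (by nlinarith)

lemma le_sqrt_right {w r : ℝ} (hr : 0 ≤ r) : r ≤ Real.sqrt (w^2+r^2) := by
  nth_rewrite 1 [show r = Real.sqrt (r^2) from (Real.sqrt_sq hr).symm]
  exact Real.sqrt_le_sqrt (by nlinarith)

lemma sqrt_le_add {w r : ℝ} (hw : 0 ≤ w) (hr : 0 ≤ r) : Real.sqrt (w^2+r^2) ≤ w + r := by
  rw [show w + r = Real.sqrt ((w+r)^2) from (Real.sqrt_sq (by linarith)).symm]
  exact Real.sqrt_le_sqrt (by nlinarith)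

lemma sqrt_pos' {w r : ℝ} (hr : 0 < r) : 0 < Real.sqrt (w^2+r^2) :=
  lt_of_lt_of_le hr (le_sqrt_right hr.le)

lemma cont_sqrt (r : ℝ) : Continuous (fun w : ℝ => Real.sqrt (w^2+r^2)) :=
  (continuous_pow 2 |>.add continuous_const).sqrt

lemma int_rep1 {a r : ℝ} (ha : 0 < a) (hr : 0 ≤ r) :
    IntegrableOn (fun w => Real.exp (-a * Real.sqrt (w^2+r^2))) (Ioi (0:ℝ)) := by
  refine (exp_neg_integrableOn_Ioi 0 ha).mono' ?_ ?_
  · exact (Real.continuous_exp.comp (continuous_const.mul (cont_sqrt r))).aestronglyMeasurable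
  · filter_upwards [ae_restrict_mem measurableSet_Ioi] with w hw
    rw [Real.norm_eq_abs, abs_of_pos (Real.exp_pos _)]
    exact Real.exp_le_exp.2 (by nlinarith [le_sqrt_left (r := r) (le_of_lt hw)])

lemma int_rep0 {a r : ℝ} (ha : 0 < a) (hr : 0 < r) :
    IntegrableOn (fun w => Real.exp (-a * Real.sqrt (w^2+r^2)) / Real.sqrt (w^2+r^2))
      (Ioi (0:ℝ)) := by
  refine ((exp_neg_integrableOn_Ioi 0 ha).const_mul r⁻¹).mono' ?_ ?_
  · exact ((Real.continuous_exp.comp (continuous_const.mul (cont_sqrt r))).div (cont_sqrt r)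
      (fun w => (sqrt_pos' hr).ne')).aestronglyMeasurable
  · filter_upwards [ae_restrict_mem measurableSet_Ioi] with w hw
    rw [Real.norm_eq_abs, abs_of_pos (div_pos (Real.exp_pos _) (sqrt_pos' hr))]
    rw [inv_mul_eq_div, div_le_div_iff₀ (sqrt_pos' hr) hr]
    have h1 : Real.exp (-a * Real.sqrt (w^2+r^2)) ≤ Real.exp (-a*w) :=
      Real.exp_le_exp.2 (by nlinarith [le_sqrt_left (r := r) (le_of_lt hw)])
    have h2 : r ≤ Real.sqrt (w^2+r^2) := le_sqrt_right hr.le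
    nlinarith [Real.exp_pos (-a * Real.sqrt (w^2+r^2)), Real.exp_pos (-a*w)]

lemma tendsto_K0_diff {a b : ℝ} (ha : 0 < a) (hb : 0 < b) :
    Tendsto (fun r => K0 (a*r) - K0 (b*r)) (𝓝[>] (0:ℝ))
      (𝓝 (∫ w in Ioi (0:ℝ), (Real.exp (-a*w) - Real.exp (-b*w))/w)) := by
  have hm : (0:ℝ) < min a b := lt_min ha hb
  have hDCT := tendsto_integral_filter_of_dominated_convergence
    (μ := volume.restrict (Ioi (0:ℝ))) (l := 𝓝[>] (0:ℝ))
    (F := fun r w => (Real.exp (-a * Real.sqrt (w^2+r^2))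
      - Real.exp (-b * Real.sqrt (w^2+r^2))) / Real.sqrt (w^2+r^2))
    (f := fun w => (Real.exp (-a*w) - Real.exp (-b*w))/w)
    (bound := fun w => |a - b| * Real.exp (-(min a b) * w))
    ?_ ?_ ?_ ?_
  · refine Tendsto.congr' ?_ hDCT
    filter_upwards [self_mem_nhdsWithin] with r hr
    rw [K0_rep ha hr, K0_rep hb hr, ← integral_sub (int_rep0 ha hr) (int_rep0 hb hr)]
    congr 1
    ext w
    rw [sub_div]
  · filter_upwards [self_mem_nhdsWithin] with r hr
    exact (((Real.continuous_exp.comp (continuous_const.mul (cont_sqrt r))).sub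
      (Real.continuous_exp.comp (continuous_const.mul (cont_sqrt r)))).div (cont_sqrt r)
      (fun w => (sqrt_pos' hr).ne')).aestronglyMeasurable
  · filter_upwards [self_mem_nhdsWithin] with r hr
    filter_upwards [ae_restrict_mem measurableSet_Ioi] with w hw
    set S := Real.sqrt (w^2+r^2) with hSdef
    have hS : (0:ℝ) < S := sqrt_pos' hr
    have hwS : w ≤ S := le_sqrt_left (le_of_lt hw)
    have hd := aux_exp_diff (a*S) (b*S)
    have hmin : min (a*S) (b*S) = (min a b) * S := by
      rcases le_total a b with h | h
      · rw [min_eq_left h, min_eq_left (mul_le_mul_of_nonneg_right h hS.le)]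
      · rw [min_eq_right h, min_eq_right (mul_le_mul_of_nonneg_right h hS.le)]
    rw [hmin] at hd
    have habs : |a*S - b*S| = |a - b| * S := by rw [← sub_mul, abs_mul, abs_of_pos hS]
    rw [habs] at hd
    rw [Real.norm_eq_abs, abs_div, abs_of_pos hS, div_le_iff₀ hS]
    calc |Real.exp (-a * S) - Real.exp (-b * S)|
        = |Real.exp (-(a*S)) - Real.exp (-(b*S))| := by rw [neg_mul, neg_mul]
      _ ≤ |a - b| * S * Real.exp (-(min a b * S)) := hd
      _ ≤ |a - b| * Real.exp (-(min a b) * w) * S := by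
          rw [neg_mul]
          have h1 : Real.exp (-(min a b * S)) ≤ Real.exp (-(min a b * w)) :=
            Real.exp_le_exp.2 (by nlinarith)
          have h2 := mul_le_mul_of_nonneg_left h1 (mul_nonneg (abs_nonneg (a-b)) hS.le)
          calc |a - b| * S * Real.exp (-(min a b * S))
              = (|a - b| * S) * Real.exp (-(min a b * S)) := by ring
            _ ≤ (|a - b| * S) * Real.exp (-(min a b * w)) := h2
            _ = |a - b| * Real.exp (-(min a b * w)) * S := by ring
  · exact (exp_neg_integrableOn_Ioi 0 hm).const_mul _
  · filter_upwards [ae_restrict_mem measurableSet_Ioi] with w hw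
    have hw0 : (0:ℝ) ≤ w := hw.le
    have hne : Real.sqrt (w^2 + (0:ℝ)^2) ≠ 0 := by
      simpa [Real.sqrt_sq hw0] using (ne_of_gt hw)
    have hc : ContinuousAt (fun r : ℝ => (Real.exp (-a * Real.sqrt (w^2+r^2))
        - Real.exp (-b * Real.sqrt (w^2+r^2))) / Real.sqrt (w^2+r^2)) 0 := by
      have hcs : Continuous (fun r : ℝ => Real.sqrt (w^2+r^2)) :=
        (continuous_const.add (continuous_pow 2)).sqrt
      exact ContinuousAt.div
        (((Real.continuous_exp.comp (continuous_const.mul hcs)).sub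
          (Real.continuous_exp.comp (continuous_const.mul hcs))).continuousAt)
        hcs.continuousAt hne
    have ht := hc.tendsto.mono_left (nhdsWithin_le_nhds (s := Set.Ioi (0:ℝ)))
    simpa [Real.sqrt_sq hw0] using ht

end Aux

section Aux2
open Set

lemma integral_exp_neg_mul {c : ℝ} (hc : 0 < c) :
    ∫ w in Ioi (0:ℝ), Real.exp (-(c*w)) = 1/c := by
  have h := integral_comp_mul_left_Ioi (fun x => Real.exp (-x)) 0 hc
  rw [mul_zero, integral_exp_neg_Ioi] at h
  simpa using h

lemma int_exp_neg_mul {c : ℝ} (hc : 0 < c) :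
    IntegrableOn (fun w => Real.exp (-(c*w))) (Ioi (0:ℝ)) := by
  simpa [neg_mul] using exp_neg_integrableOn_Ioi 0 hc

lemma K1_diff_eq {a b r : ℝ} (ha : 0 < a) (hb : 0 < b) (hr : 0 < r) :
    a * K1 (a*r) - b * K1 (b*r) = ∫ w in Ioi (0:ℝ),
      (a * (Real.exp (-a * Real.sqrt (w^2+r^2)) - Real.exp (-(a*w)))
       - b * (Real.exp (-b * Real.sqrt (w^2+r^2)) - Real.exp (-(b*w)))) / r := by
  have ia1 := int_rep1 ha hr.le
  have ia2 := int_exp_neg_mul ha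
  have ib1 := int_rep1 hb hr.le
  have ib2 := int_exp_neg_mul hb
  have hstep : (fun w => (a * (Real.exp (-a * Real.sqrt (w^2+r^2)) - Real.exp (-(a*w)))
       - b * (Real.exp (-b * Real.sqrt (w^2+r^2)) - Real.exp (-(b*w)))) / r)
      = fun w => r⁻¹ * (a * (Real.exp (-a * Real.sqrt (w^2+r^2)) - Real.exp (-(a*w)))
       - b * (Real.exp (-b * Real.sqrt (w^2+r^2)) - Real.exp (-(b*w)))) := by
    ext w; rw [div_eq_inv_mul]
  have hfa : Integrable (fun w => a * (Real.exp (-a * Real.sqrt (w^2+r^2)) - Real.exp (-(a*w))))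
      (volume.restrict (Ioi (0:ℝ))) := (ia1.sub ia2).const_mul a
  have hfb : Integrable (fun w => b * (Real.exp (-b * Real.sqrt (w^2+r^2)) - Real.exp (-(b*w))))
      (volume.restrict (Ioi (0:ℝ))) := (ib1.sub ib2).const_mul b
  have hga : Integrable (fun w => Real.exp (-a * Real.sqrt (w^2+r^2)) - Real.exp (-(a*w)))
      (volume.restrict (Ioi (0:ℝ))) := ia1.sub ia2
  have hgb : Integrable (fun w => Real.exp (-b * Real.sqrt (w^2+r^2)) - Real.exp (-(b*w)))
      (volume.restrict (Ioi (0:ℝ))) := ib1.sub ib2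
  rw [hstep, integral_const_mul, integral_sub hfa hfb,
    integral_const_mul, integral_const_mul, integral_sub ia1 ia2, integral_sub ib1 ib2,
    ← K1_rep ha hr, ← K1_rep hb hr, integral_exp_neg_mul ha, integral_exp_neg_mul hb]
  field_simp
  ring

lemma tendsto_K1_diff {a b : ℝ} (ha : 0 < a) (hb : 0 < b) :
    Tendsto (fun r => a * K1 (a*r) - b * K1 (b*r)) (𝓝[>] (0:ℝ)) (𝓝 0) := by
  have key : ∀ c r w : ℝ, 0 < c → 0 < r → 0 < w →
      |Real.exp (-c * Real.sqrt (w^2+r^2)) - Real.exp (-(c*w))|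
        ≤ c * (Real.sqrt (w^2+r^2) - w) * Real.exp (-(c*w)) := by
    intro c r w hc hrr hw
    set S := Real.sqrt (w^2+r^2) with hS
    have hwS : w ≤ S := le_sqrt_left hw.le
    have hd := aux_exp_diff (c*S) (c*w)
    have hmin : min (c*S) (c*w) = c*w := min_eq_right (by nlinarith)
    have habs : |c*S - c*w| = c * (S - w) := by
      rw [abs_of_nonneg (by nlinarith)]; ring
    rw [hmin, habs] at hd
    calc |Real.exp (-c * S) - Real.exp (-(c*w))|
        = |Real.exp (-(c*S)) - Real.exp (-(c*w))| := by rw [neg_mul]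
      _ ≤ c * (S - w) * Real.exp (-(c*w)) := hd
  have hDCT := tendsto_integral_filter_of_dominated_convergence
    (μ := volume.restrict (Ioi (0:ℝ))) (l := 𝓝[>] (0:ℝ))
    (F := fun r w => (a * (Real.exp (-a * Real.sqrt (w^2+r^2)) - Real.exp (-(a*w)))
       - b * (Real.exp (-b * Real.sqrt (w^2+r^2)) - Real.exp (-(b*w)))) / r)
    (f := fun _ => (0:ℝ))
    (bound := fun w => a^2 * Real.exp (-(a*w)) + b^2 * Real.exp (-(b*w)))
    ?_ ?_ ?_ ?_
  · rw [integral_zero] at hDCT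
    refine Tendsto.congr' ?_ hDCT
    filter_upwards [self_mem_nhdsWithin] with r hr
    exact (K1_diff_eq ha hb hr).symm
  · filter_upwards [self_mem_nhdsWithin] with r hr
    have : Continuous (fun w : ℝ => (a * (Real.exp (-a * Real.sqrt (w^2+r^2)) - Real.exp (-(a*w)))
       - b * (Real.exp (-b * Real.sqrt (w^2+r^2)) - Real.exp (-(b*w)))) / r) := by
      apply Continuous.div_const
      apply Continuous.sub
      · exact continuous_const.mul ((Real.continuous_exp.comp
          (continuous_const.mul (cont_sqrt r))).sub (Real.continuous_exp.comp
          (continuous_const.mul continuous_id).neg))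
      · exact continuous_const.mul ((Real.continuous_exp.comp
          (continuous_const.mul (cont_sqrt r))).sub (Real.continuous_exp.comp
          (continuous_const.mul continuous_id).neg))
    exact this.aestronglyMeasurable
  · filter_upwards [self_mem_nhdsWithin] with r hr
    filter_upwards [ae_restrict_mem measurableSet_Ioi] with w hw
    have hwS : Real.sqrt (w^2+r^2) - w ≤ r := by
      have := sqrt_le_add (le_of_lt hw) hr.le
      linarith
    have hwS0 : 0 ≤ Real.sqrt (w^2+r^2) - w := by
      have := le_sqrt_left (r := r) (le_of_lt hw); linarith
    have ka := key a r w ha hr hw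
    have kb := key b r w hb hr hw
    have e1 := Real.exp_pos (-(a*w))
    have e2 := Real.exp_pos (-(b*w))
    rw [Real.norm_eq_abs, abs_div, abs_of_pos (show (0:ℝ) < r from hr), div_le_iff₀ hr]
    calc |a * (Real.exp (-a * Real.sqrt (w^2+r^2)) - Real.exp (-(a*w)))
       - b * (Real.exp (-b * Real.sqrt (w^2+r^2)) - Real.exp (-(b*w)))|
        ≤ |a * (Real.exp (-a * Real.sqrt (w^2+r^2)) - Real.exp (-(a*w)))|
          + |b * (Real.exp (-b * Real.sqrt (w^2+r^2)) - Real.exp (-(b*w)))| := abs_sub _ _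
      _ = a * |Real.exp (-a * Real.sqrt (w^2+r^2)) - Real.exp (-(a*w))|
          + b * |Real.exp (-b * Real.sqrt (w^2+r^2)) - Real.exp (-(b*w))| := by
            rw [abs_mul, abs_mul, abs_of_pos ha, abs_of_pos hb]
      _ ≤ a * (a * (Real.sqrt (w^2+r^2) - w) * Real.exp (-(a*w)))
          + b * (b * (Real.sqrt (w^2+r^2) - w) * Real.exp (-(b*w))) := by
            exact add_le_add (mul_le_mul_of_nonneg_left ka ha.le)
              (mul_le_mul_of_nonneg_left kb hb.le)
      _ ≤ a * (a * r * Real.exp (-(a*w))) + b * (b * r * Real.exp (-(b*w))) := by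
            apply add_le_add
            · apply mul_le_mul_of_nonneg_left _ ha.le
              apply mul_le_mul_of_nonneg_right _ e1.le
              nlinarith
            · apply mul_le_mul_of_nonneg_left _ hb.le
              apply mul_le_mul_of_nonneg_right _ e2.le
              nlinarith
      _ = (a^2 * Real.exp (-(a*w)) + b^2 * Real.exp (-(b*w))) * r := by ring
  · exact ((int_exp_neg_mul ha).const_mul _).add ((int_exp_neg_mul hb).const_mul _)
  · filter_upwards [ae_restrict_mem measurableSet_Ioi] with w hw
    have hw' : (0:ℝ) < w := hw
    apply squeeze_zero_norm' (a := fun r : ℝ =>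
      r * ((a^2 * Real.exp (-(a*w)) + b^2 * Real.exp (-(b*w)))/(2*w)))
    · filter_upwards [self_mem_nhdsWithin] with r hr
      have hS2 : Real.sqrt (w^2+r^2) ^ 2 = w^2 + r^2 := Real.sq_sqrt (by positivity)
      have hwS : w ≤ Real.sqrt (w^2+r^2) := le_sqrt_left hw.le
      have hgap : Real.sqrt (w^2+r^2) - w ≤ r^2/(2*w) := by
        rw [le_div_iff₀ (by linarith : (0:ℝ) < 2*w)]
        nlinarith [sq_nonneg (Real.sqrt (w^2+r^2) - w)]
      have ka : |Real.exp (-a * Real.sqrt (w^2+r^2)) - Real.exp (-(a*w))|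
          ≤ a * (Real.sqrt (w^2+r^2) - w) * Real.exp (-(a*w)) := by
        set S := Real.sqrt (w^2+r^2)
        have hd := aux_exp_diff (a*S) (a*w)
        have hmin : min (a*S) (a*w) = a*w := min_eq_right (by nlinarith)
        have habs : |a*S - a*w| = a * (S - w) := by
          rw [abs_of_nonneg (by nlinarith)]; ring
        rw [hmin, habs] at hd
        calc |Real.exp (-a * S) - Real.exp (-(a*w))|
            = |Real.exp (-(a*S)) - Real.exp (-(a*w))| := by rw [neg_mul]
          _ ≤ a * (S - w) * Real.exp (-(a*w)) := hd
      have kb : |Real.exp (-b * Real.sqrt (w^2+r^2)) - Real.exp (-(b*w))|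
          ≤ b * (Real.sqrt (w^2+r^2) - w) * Real.exp (-(b*w)) := by
        set S := Real.sqrt (w^2+r^2)
        have hd := aux_exp_diff (b*S) (b*w)
        have hmin : min (b*S) (b*w) = b*w := min_eq_right (by nlinarith)
        have habs : |b*S - b*w| = b * (S - w) := by
          rw [abs_of_nonneg (by nlinarith)]; ring
        rw [hmin, habs] at hd
        calc |Real.exp (-b * S) - Real.exp (-(b*w))|
            = |Real.exp (-(b*S)) - Real.exp (-(b*w))| := by rw [neg_mul]
          _ ≤ b * (S - w) * Real.exp (-(b*w)) := hd
      have e1 := Real.exp_pos (-(a*w))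
      have e2 := Real.exp_pos (-(b*w))
      have hwS0 : 0 ≤ Real.sqrt (w^2+r^2) - w := by linarith
      rw [Real.norm_eq_abs, abs_div, abs_of_pos (show (0:ℝ) < r from hr), div_le_iff₀ hr]
      calc |a * (Real.exp (-a * Real.sqrt (w^2+r^2)) - Real.exp (-(a*w)))
         - b * (Real.exp (-b * Real.sqrt (w^2+r^2)) - Real.exp (-(b*w)))|
          ≤ |a * (Real.exp (-a * Real.sqrt (w^2+r^2)) - Real.exp (-(a*w)))|
            + |b * (Real.exp (-b * Real.sqrt (w^2+r^2)) - Real.exp (-(b*w)))| := abs_sub _ _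
        _ = a * |Real.exp (-a * Real.sqrt (w^2+r^2)) - Real.exp (-(a*w))|
            + b * |Real.exp (-b * Real.sqrt (w^2+r^2)) - Real.exp (-(b*w))| := by
              rw [abs_mul, abs_mul, abs_of_pos ha, abs_of_pos hb]
        _ ≤ a * (a * (Real.sqrt (w^2+r^2) - w) * Real.exp (-(a*w)))
            + b * (b * (Real.sqrt (w^2+r^2) - w) * Real.exp (-(b*w))) :=
              add_le_add (mul_le_mul_of_nonneg_left ka ha.le)
                (mul_le_mul_of_nonneg_left kb hb.le)
        _ ≤ a * (a * (r^2/(2*w)) * Real.exp (-(a*w)))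
            + b * (b * (r^2/(2*w)) * Real.exp (-(b*w))) := by
              apply add_le_add
              · apply mul_le_mul_of_nonneg_left _ ha.le
                exact mul_le_mul_of_nonneg_right
                  (mul_le_mul_of_nonneg_left hgap ha.le) e1.le
              · apply mul_le_mul_of_nonneg_left _ hb.le
                exact mul_le_mul_of_nonneg_right
                  (mul_le_mul_of_nonneg_left hgap hb.le) e2.le
        _ = (r * ((a^2 * Real.exp (-(a*w)) + b^2 * Real.exp (-(b*w)))/(2*w))) * r := by
              field_simp
    · have hcont : Continuous (fun r : ℝ =>
          r * ((a^2 * Real.exp (-(a*w)) + b^2 * Real.exp (-(b*w)))/(2*w))) :=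
        continuous_id.mul continuous_const
      have := (hcont.tendsto 0).mono_left (nhdsWithin_le_nhds (s := Ioi (0:ℝ)))
      simpa using this

lemma hasDerivAt_K0 {x : ℝ} (hx : 0 < x) : HasDerivAt K0 (-K1 x) x := by
  have h := hasDerivAt_integral_of_dominated_loc_of_deriv_le
    (μ := volume.restrict (Ioi (0:ℝ))) (x₀ := x) (s := Metric.ball x (x/2)) (Metric.ball_mem_nhds x (by positivity : (0:ℝ) < x/2))
    (F := fun y t => Real.exp (-y * Real.cosh t))
    (F' := fun y t => Real.exp (-y * Real.cosh t) * (-Real.cosh t))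
    (bound := fun t => Real.exp (-(x/2) * Real.cosh t) * Real.cosh t)
    (Eventually.of_forall fun y => (Real.continuous_exp.comp
      (continuous_const.mul Real.continuous_cosh)).aestronglyMeasurable)
    (int_exp_cosh hx)
    (((Real.continuous_exp.comp (continuous_const.mul Real.continuous_cosh)).mul
      Real.continuous_cosh.neg).aestronglyMeasurable)
    ?_ (int_cosh_exp_cosh (by positivity)) ?_
  · have h2 : (∫ t in Ioi (0:ℝ), Real.exp (-x * Real.cosh t) * (-Real.cosh t)) = -K1 x := by
      rw [K1, ← integral_neg]
      congr 1
      ext t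
      ring
    have h3 := h.2
    rw [h2] at h3
    exact h3
  · filter_upwards with t
    intro y hy
    rw [Metric.mem_ball, Real.dist_eq, abs_sub_lt_iff] at hy
    have hy2 : x/2 < y := by linarith [hy.2]
    have hch := Real.cosh_pos t
    rw [Real.norm_eq_abs, abs_mul, abs_neg, abs_of_pos hch, abs_of_pos (Real.exp_pos _)]
    exact mul_le_mul_of_nonneg_right
      (Real.exp_le_exp.2 (by nlinarith)) hch.le
  · filter_upwards with t
    intro y hy
    have : HasDerivAt (fun y : ℝ => -y * Real.cosh t) (-Real.cosh t) y := by
      simpa using ((hasDerivAt_id y).neg.mul_const (Real.cosh t))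
    simpa using this.exp

end Aux2

/-- For `λ₁ ≠ λ₂` positive and
`G₀(r) = -(1/(2π(λ₁-λ₂²))) [K₀(λ₁ r) - K₀(λ₂ r)]`, both `G₀` and `G₀'`
extend continuously to `r = 0`, with `G₀'(0) = 0`; i.e. `G₀` is `C¹` on
`[0,∞)` after continuous extension. -/
theorem stmt18 (lam1 lam2 : ℝ) (h1 : 0 < lam1) (h2 : 0 < lam2) (hne : lam1 ≠ lam2)
    (G0 : ℝ → ℝ)
    (hG0 : ∀ r, G0 r = -(1 / (2 * π * (lam1 ^ 2 - lam2 ^ 2))) *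
      (K0 (lam1 * r) - K0 (lam2 * r))) :
    (∃ L : ℝ, Tendsto G0 (𝓝[>] (0 : ℝ)) (𝓝 L)) ∧
    Tendsto (deriv G0) (𝓝[>] (0 : ℝ)) (𝓝 0) := by
  set c : ℝ := -(1 / (2 * π * (lam1 ^ 2 - lam2 ^ 2))) with hc
  have hGfun : G0 = fun r => c * (K0 (lam1 * r) - K0 (lam2 * r)) := funext hG0
  constructor
  · refine ⟨c * ∫ w in Set.Ioi (0:ℝ), (Real.exp (-lam1*w) - Real.exp (-lam2*w))/w, ?_⟩
    rw [hGfun]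
    exact (tendsto_K0_diff h1 h2).const_mul c
  · have hder : ∀ r ∈ Set.Ioi (0:ℝ), deriv G0 r
        = -c * (lam1 * K1 (lam1*r) - lam2 * K1 (lam2*r)) := by
      intro r hr
      have hr' : (0:ℝ) < r := hr
      have hra : HasDerivAt (fun r => K0 (lam1*r)) (-K1 (lam1*r) * lam1) r := by
        have := (hasDerivAt_K0 (mul_pos h1 hr')).comp r
          ((hasDerivAt_id r).const_mul lam1)
        simpa [Function.comp_def] using this
      have hrb : HasDerivAt (fun r => K0 (lam2*r)) (-K1 (lam2*r) * lam2) r := by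
        have := (hasDerivAt_K0 (mul_pos h2 hr')).comp r
          ((hasDerivAt_id r).const_mul lam2)
        simpa [Function.comp_def] using this
      have hG : HasDerivAt G0 (c * ((-K1 (lam1*r) * lam1) - (-K1 (lam2*r) * lam2))) r := by
        rw [hGfun]
        exact (hra.sub hrb).const_mul c
      rw [hG.deriv]
      ring
    have hlim := (tendsto_K1_diff h1 h2).const_mul (-c)
    rw [mul_zero] at hlim
    refine Tendsto.congr' ?_ hlim
    filter_upwards [self_mem_nhdsWithin] with r hr
    exact (hder r hr).symm
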